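/- arXiv:2012.09715 — 2 statements merged into one kernel-verified Lean document; each statement's English description precedes it below -/
import Mathlib

section
/- Let φ be the standard Gaussian density and z_q := Φ⁻¹(1 − 2^{−q}). Then lim_{q→∞} z_q / √(q·log 4 − log(q·π·log 16)) = 1; in particular z_q ≥ √(q·log 4 − log(q·π·log 16)) asymptotically. -/
open Real MeasureTheory Filter Set

noncomputable def phi (z : ℝ) : ℝ := (Real.sqrt (2 * Real.pi))⁻¹ * Real.exp (-z ^ 2 / 2)

lemma phi_eq (s : ℝ) : phi s = (Real.sqrt (2 * Real.pi))⁻¹ * Real.exp (-(1/2) * s ^ 2) := by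
  unfold phi; congr 1; ring_nf

lemma sqrt_two_pi_pos : 0 < Real.sqrt (2 * Real.pi) := Real.sqrt_pos.2 (by positivity)

lemma phi_pos (s : ℝ) : 0 < phi s := by
  unfold phi
  positivity

lemma continuous_phi : Continuous phi := by
  unfold phi; fun_prop

lemma integrable_phi : Integrable phi := by
  have : phi = fun s => (Real.sqrt (2 * Real.pi))⁻¹ * Real.exp (-(1/2) * s ^ 2) :=
    funext phi_eq
  rw [this]
  exact (integrable_exp_neg_mul_sq (by norm_num)).const_mul _

lemma integral_phi : ∫ s, phi s = 1 := by
  have : ∫ s, phi s = (Real.sqrt (2 * Real.pi))⁻¹ * ∫ s : ℝ, Real.exp (-(1/2) * s ^ 2) := by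
    rw [← integral_const_mul]
    exact integral_congr_ae (Eventually.of_forall fun s => phi_eq s)
  rw [this, integral_gaussian, show π / (1/2) = 2 * π by ring]
  exact inv_mul_cancel₀ sqrt_two_pi_pos.ne'

lemma hasDerivAt_phi (s : ℝ) : HasDerivAt phi (-(s * phi s)) s := by
  have h1 : HasDerivAt (fun x : ℝ => -x ^ 2 / 2) (-s) s := by
    have := ((hasDerivAt_pow 2 s).div_const 2).fun_neg
    have heq : (fun x : ℝ => -(x ^ 2 / 2)) = fun x : ℝ => -x ^ 2 / 2 := by
      funext x; ring
    rw [heq] at this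
    refine this.congr_deriv ?_
    push_cast; ring
  have h2 := (h1.exp).const_mul (Real.sqrt (2 * Real.pi))⁻¹
  refine h2.congr_deriv ?_
  unfold phi; ring

lemma tendsto_phi_atTop : Tendsto phi atTop (nhds 0) := by
  have hp : Tendsto (fun s : ℝ => s ^ 2) atTop atTop := tendsto_pow_atTop (by norm_num)
  have h1 : Tendsto (fun s : ℝ => -s ^ 2 / 2) atTop atBot := by
    apply Tendsto.atBot_div_const (by norm_num : (0:ℝ) < 2)
    have := tendsto_neg_atTop_atBot.comp hp
    simpa [Function.comp_def] using this
  have h2 : Tendsto (fun s : ℝ => Real.exp (-s ^ 2 / 2)) atTop (nhds 0) :=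
    Real.tendsto_exp_atBot.comp h1
  have := h2.const_mul (Real.sqrt (2 * Real.pi))⁻¹
  have heq : phi = fun s : ℝ => (Real.sqrt (2 * Real.pi))⁻¹ * Real.exp (-s ^ 2 / 2) := rfl
  rw [heq]
  simpa using this

lemma integrableOn_id_mul_phi (z : ℝ) : IntegrableOn (fun s => s * phi s) (Ioi z) := by
  have h : Integrable (fun s : ℝ => (Real.sqrt (2 * Real.pi))⁻¹ * (s * Real.exp (-(1/2) * s ^ 2))) :=
    (integrable_mul_exp_neg_mul_sq (by norm_num)).const_mul _
  have heq : (fun s : ℝ => s * phi s)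
      = fun s : ℝ => (Real.sqrt (2 * Real.pi))⁻¹ * (s * Real.exp (-(1/2) * s ^ 2)) := by
    funext x; rw [phi_eq]; ring
  rw [heq]
  exact h.integrableOn

lemma integral_Ioi_id_mul_phi (z : ℝ) : ∫ s in Ioi z, s * phi s = phi z := by
  have := integral_Ioi_of_hasDerivAt_of_tendsto' (f := fun s => -phi s)
    (f' := fun s => s * phi s) (a := z) (m := 0)
    (fun x _ => by simpa using (hasDerivAt_phi x).fun_neg)
    (integrableOn_id_mul_phi z)
    (by simpa using tendsto_phi_atTop.neg)
  simpa using this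


noncomputable def Phi (z : ℝ) : ℝ := ∫ s in Set.Iic z, phi s

lemma mills_upper {z : ℝ} (hz : 0 < z) : ∫ s in Ioi z, phi s ≤ phi z / z := by
  have h1 : ∫ s in Ioi z, phi s ≤ ∫ s in Ioi z, z⁻¹ * (s * phi s) := by
    apply setIntegral_mono_on integrable_phi.integrableOn
      ((integrableOn_id_mul_phi z).const_mul _) measurableSet_Ioi
    intro x hx
    rw [mem_Ioi] at hx
    have hphi := phi_pos x
    rw [show z⁻¹ * (x * phi x) = (x / z) * phi x by ring]
    have h1 : (1:ℝ) ≤ x / z := (one_le_div hz).2 hx.le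
    nlinarith
  rw [integral_const_mul, integral_Ioi_id_mul_phi] at h1
  rw [div_eq_inv_mul]
  exact h1

noncomputable def hfun (s : ℝ) : ℝ := s / (1 + s ^ 2) * phi s

noncomputable def gfun (s : ℝ) : ℝ := (1 - 2 / (1 + s ^ 2) ^ 2) * phi s

lemma one_add_sq_pos (s : ℝ) : (0:ℝ) < 1 + s ^ 2 := by positivity

lemma hasDerivAt_neg_hfun (s : ℝ) : HasDerivAt (fun x => -hfun x) (gfun s) s := by
  have hd : HasDerivAt (fun x : ℝ => x / (1 + x ^ 2))
      ((1 * (1 + s ^ 2) - s * (2 * s)) / (1 + s ^ 2) ^ 2) s := by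
    have hden : HasDerivAt (fun x : ℝ => 1 + x ^ 2) (2 * s) s := by
      have := (hasDerivAt_pow 2 s).const_add 1
      simpa using this
    exact (hasDerivAt_id s).div hden (one_add_sq_pos s).ne'
  have := (hd.mul (hasDerivAt_phi s)).neg
  refine this.congr_deriv ?_
  unfold gfun
  have hne := (one_add_sq_pos s).ne'
  field_simp
  ring

lemma abs_gfun_le (s : ℝ) : ‖gfun s‖ ≤ phi s := by
  unfold gfun
  rw [norm_mul, Real.norm_eq_abs, Real.norm_eq_abs, abs_of_pos (phi_pos s)]
  have h1 : (0:ℝ) < 2 / (1 + s ^ 2) ^ 2 := by positivity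
  have h2 : 2 / (1 + s ^ 2) ^ 2 ≤ 2 := by
    apply div_le_self (by norm_num)
    nlinarith [sq_nonneg s, sq_nonneg (s^2)]
  have : |1 - 2 / (1 + s ^ 2) ^ 2| ≤ 1 := by
    rw [abs_le]; constructor <;> nlinarith
  nlinarith [phi_pos s, abs_nonneg (1 - 2 / (1 + s ^ 2) ^ 2)]

lemma integrableOn_gfun (z : ℝ) : IntegrableOn gfun (Ioi z) := by
  apply Integrable.mono' integrable_phi.integrableOn
  · apply Continuous.aestronglyMeasurable
    unfold gfun
    apply Continuous.mul _ continuous_phi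
    apply Continuous.sub continuous_const
    apply Continuous.div continuous_const (by fun_prop)
    intro s
    positivity
  · exact Eventually.of_forall fun s => abs_gfun_le s

lemma tendsto_hfun_atTop : Tendsto hfun atTop (nhds 0) := by
  apply squeeze_zero' (g := phi)
  · filter_upwards [eventually_ge_atTop (0:ℝ)] with s hs
    unfold hfun
    have := phi_pos s
    have := one_add_sq_pos s
    positivity
  · filter_upwards [eventually_ge_atTop (0:ℝ)] with s hs
    unfold hfun
    have h1 : s / (1 + s ^ 2) ≤ 1 := by
      rw [div_le_one (one_add_sq_pos s)]; nlinarith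
    nlinarith [phi_pos s, div_nonneg hs (one_add_sq_pos s).le]
  · exact tendsto_phi_atTop

lemma integral_Ioi_gfun (z : ℝ) : ∫ s in Ioi z, gfun s = hfun z := by
  have := integral_Ioi_of_hasDerivAt_of_tendsto' (f := fun s => -hfun s)
    (f' := gfun) (a := z) (m := 0)
    (fun x _ => hasDerivAt_neg_hfun x)
    (integrableOn_gfun z)
    (by simpa using tendsto_hfun_atTop.neg)
  simpa using this

lemma mills_lower (z : ℝ) : z / (1 + z ^ 2) * phi z ≤ ∫ s in Ioi z, phi s := by
  rw [show z / (1 + z ^ 2) * phi z = hfun z from rfl, ← integral_Ioi_gfun]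
  apply setIntegral_mono_on (integrableOn_gfun z) integrable_phi.integrableOn measurableSet_Ioi
  intro x _
  unfold gfun
  nlinarith [phi_pos x, (by positivity : (0:ℝ) < 2 / (1 + x ^ 2) ^ 2)]

lemma Phi_add_tail (z : ℝ) : Phi z + ∫ s in Ioi z, phi s = 1 := by
  unfold Phi
  rw [intervalIntegral.integral_Iic_add_Ioi integrable_phi.integrableOn integrable_phi.integrableOn, integral_phi]

lemma Phi_mono : Monotone Phi := by
  intro a b hab
  apply setIntegral_mono_set integrable_phi.integrableOn
    (Eventually.of_forall fun s => (phi_pos s).le)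
    (HasSubset.Subset.eventuallyLE (Iic_subset_Iic.2 hab))


lemma log4_eq : Real.log 4 = 2 * Real.log 2 := by
  rw [show (4:ℝ) = 2 ^ (2:ℕ) by norm_num, Real.log_pow]; push_cast; ring

lemma log16_eq : Real.log 16 = 2 * Real.log 4 := by
  rw [show (16:ℝ) = 4 ^ (2:ℕ) by norm_num, Real.log_pow]; push_cast; ring

lemma log4_pos : 0 < Real.log 4 := Real.log_pos (by norm_num)

lemma hlogphi (z : ℝ) : Real.log (phi z) = -(Real.log (2*π) / 2) + (-z^2/2) := by
  unfold phi
  rw [Real.log_mul (inv_ne_zero sqrt_two_pi_pos.ne') (Real.exp_ne_zero _), Real.log_inv,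
    Real.log_sqrt (by positivity), Real.log_exp]

lemma tendsto_two_rpow_neg : Tendsto (fun q : ℝ => (2:ℝ) ^ (-q)) atTop (nhds 0) := by
  have h1 : (fun q : ℝ => (2:ℝ) ^ (-q)) = fun q => Real.exp (Real.log 2 * -q) := by
    funext q; rw [Real.rpow_def_of_pos two_pos]
  rw [h1]
  apply Real.tendsto_exp_atBot.comp
  exact tendsto_neg_atTop_atBot.const_mul_atBot (Real.log_pos one_lt_two)

lemma key (Φinv : ℝ → ℝ)
    (hinv : ∀ y ∈ Set.Ioo (0 : ℝ) 1, Phi (Φinv y) = y) :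
    ∀ᶠ q : ℝ in atTop,
      3 ≤ Φinv (1 - (2:ℝ) ^ (-q)) ∧
      (Φinv (1 - (2:ℝ) ^ (-q))) ^ 2 ≤ q * Real.log 4 ∧
      q * Real.log 4 - Real.log (q * π * Real.log 16) ≤ (Φinv (1 - (2:ℝ) ^ (-q))) ^ 2 := by
  have hT3 : 0 < ∫ s in Ioi (3:ℝ), phi s := by
    refine lt_of_lt_of_le ?_ (mills_lower 3)
    have := phi_pos 3
    positivity
  filter_upwards [eventually_gt_atTop (0:ℝ),
    tendsto_two_rpow_neg.eventually_lt_const hT3] with q hq0 hqlt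
  set z := Φinv (1 - (2:ℝ) ^ (-q)) with hzdef
  have h2pos : (0:ℝ) < (2:ℝ) ^ (-q) := Real.rpow_pos_of_pos two_pos _
  have h2lt1 : (2:ℝ) ^ (-q) < 1 :=
    Real.rpow_lt_one_of_one_lt_of_neg one_lt_two (by linarith)
  have hPz : Phi z = 1 - (2:ℝ) ^ (-q) := hinv _ ⟨by linarith, by linarith⟩
  have hTz : ∫ s in Ioi z, phi s = (2:ℝ) ^ (-q) := by
    have := Phi_add_tail z; linarith
  have hz3 : 3 < z := by
    by_contra h
    push_neg at h
    have h1 : Phi z ≤ Phi 3 := Phi_mono h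
    have h2 := Phi_add_tail 3
    rw [hPz] at h1
    linarith
  have hzpos : (0:ℝ) < z := by linarith
  have hz2 : (9:ℝ) ≤ z ^ 2 := by nlinarith
  have hlog2pos : 0 < Real.log 2 := Real.log_pos one_lt_two
  -- upper Mills
  have hmu : (2:ℝ) ^ (-q) ≤ phi z / z := hTz ▸ mills_upper hzpos
  have hmu' : (2:ℝ) ^ (-q) * z ≤ phi z := by
    rw [← le_div_iff₀ hzpos]; exact hmu
  have hlog_up := Real.log_le_log (by positivity) hmu'
  rw [Real.log_mul h2pos.ne' hzpos.ne', Real.log_rpow two_pos, hlogphi] at hlog_up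
  have hA : Real.log (2*π*z^2) = Real.log (2*π) + 2 * Real.log z := by
    rw [Real.log_mul (by positivity) (by positivity), Real.log_pow]; push_cast; ring
  have hup : z ^ 2 ≤ q * Real.log 4 - Real.log (2*π*z^2) := by
    rw [log4_eq, hA]; linarith
  have hA3 : (3:ℝ) ≤ Real.log (2*π*z^2) := by
    rw [Real.le_log_iff_exp_le (by positivity)]
    have he : Real.exp 3 < 21 := by
      have h1 := Real.exp_one_lt_d9
      have h2 : Real.exp 3 = (Real.exp 1) ^ (3:ℕ) := by
        rw [← Real.exp_nat_mul]; norm_num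
      rw [h2]
      have h3 : Real.exp 1 ^ (3:ℕ) < 2.7182818286 ^ (3:ℕ) :=
        pow_lt_pow_left₀ h1 (Real.exp_pos 1).le (by norm_num)
      nlinarith
    have hpi := Real.pi_gt_three
    nlinarith
  have E1 : z ^ 2 ≤ q * Real.log 4 := by linarith
  -- lower Mills
  have hml : z / (1+z^2) * phi z ≤ (2:ℝ) ^ (-q) := hTz ▸ mills_lower z
  have hlhs_pos : 0 < z / (1+z^2) * phi z :=
    mul_pos (div_pos hzpos (one_add_sq_pos z)) (phi_pos z)
  have hlog_lo := Real.log_le_log hlhs_pos hml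
  rw [Real.log_mul (div_pos hzpos (one_add_sq_pos z)).ne' (phi_pos z).ne',
    Real.log_div hzpos.ne' (one_add_sq_pos z).ne', hlogphi, Real.log_rpow two_pos] at hlog_lo
  have hB : Real.log (2*π*(1+z^2)^2/z^2)
      = Real.log (2*π) + 2 * Real.log (1+z^2) - 2 * Real.log z := by
    rw [Real.log_div (by positivity) (by positivity),
      Real.log_mul (by positivity) (by positivity), Real.log_pow, Real.log_pow]
    push_cast; ring
  have hlow : q * Real.log 4 - Real.log (2*π*(1+z^2)^2/z^2) ≤ z ^ 2 := by
    rw [log4_eq, hB]; linarith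
  have hq_large : 2*π*(1+z^2)^2/z^2 ≤ q * π * Real.log 16 := by
    have hz2ne : (z:ℝ)^2 ≠ 0 := by positivity
    have h1 : (1+z^2)^2/z^2 = z^2 + 2 + 1/z^2 := by field_simp; ring
    have h2 : 1/z^2 ≤ 1/9 := by
      apply one_div_le_one_div_of_le (by norm_num) hz2
    have h3 : (1+z^2)^2/z^2 ≤ q * Real.log 4 := by rw [h1]; linarith
    have h4 : 2*π*(1+z^2)^2/z^2 = 2*π*((1+z^2)^2/z^2) := by ring
    rw [h4, log16_eq, show q * π * (2 * Real.log 4) = 2*π*(q * Real.log 4) by ring]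
    have hpi := Real.pi_pos
    nlinarith [sq_nonneg ((1+z^2)/z)]
  have hBle : Real.log (2*π*(1+z^2)^2/z^2) ≤ Real.log (q * π * Real.log 16) := by
    apply Real.log_le_log ?_ hq_large
    have := Real.pi_pos
    positivity
  exact ⟨hz3.le, E1, by linarith⟩


lemma pi_log16_pos : 0 < π * Real.log 16 :=
  mul_pos Real.pi_pos (Real.log_pos (by norm_num))

lemma tendsto_r :
    Tendsto (fun q : ℝ => Real.log (q * π * Real.log 16) / (q * Real.log 4)) atTop (nhds 0) := by
  have h1 : Tendsto (fun q : ℝ => Real.log q / q * (Real.log 4)⁻¹) atTop (nhds 0) := by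
    have := Real.isLittleO_log_id_atTop.tendsto_div_nhds_zero
    simpa using this.mul_const (Real.log 4)⁻¹
  have hu : Tendsto (fun q : ℝ => q * Real.log 4) atTop atTop :=
    tendsto_id.atTop_mul_const log4_pos
  have h2 : Tendsto (fun q : ℝ => Real.log (π * Real.log 16) * (q * Real.log 4)⁻¹)
      atTop (nhds 0) := by
    simpa using (hu.inv_tendsto_atTop).const_mul (Real.log (π * Real.log 16))
  have h3 : Tendsto (fun q : ℝ => Real.log q / q * (Real.log 4)⁻¹
      + Real.log (π * Real.log 16) * (q * Real.log 4)⁻¹) atTop (nhds 0) := by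
    simpa using h1.add h2
  apply h3.congr'
  filter_upwards [eventually_gt_atTop (0:ℝ)] with q hq
  rw [show q * π * Real.log 16 = q * (π * Real.log 16) by ring,
    Real.log_mul hq.ne' pi_log16_pos.ne']
  field_simp

lemma tendsto_L :
    Tendsto (fun q : ℝ => q * Real.log 4 - Real.log (q * π * Real.log 16)) atTop atTop := by
  have hu : Tendsto (fun q : ℝ => q * Real.log 4) atTop atTop :=
    tendsto_id.atTop_mul_const log4_pos
  have hg : Tendsto (fun q : ℝ =>
      1 - Real.log (q * π * Real.log 16) / (q * Real.log 4)) atTop (nhds 1) := by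
    simpa using tendsto_const_nhds.sub tendsto_r
  have h1 := hu.atTop_mul_pos (by norm_num : (0:ℝ) < 1) hg
  apply h1.congr'
  filter_upwards [eventually_gt_atTop (0:ℝ)] with q hq
  have hne : q * Real.log 4 ≠ 0 := by positivity
  field_simp

theorem tail_quantile_lower_asymptotic (Φinv : ℝ → ℝ)
    (hinv : ∀ y ∈ Set.Ioo (0 : ℝ) 1, Phi (Φinv y) = y) :
    Tendsto (fun q : ℝ =>
        Φinv (1 - (2 : ℝ) ^ (-q)) /
          Real.sqrt (q * Real.log 4 - Real.log (q * Real.pi * Real.log 16)))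
      atTop (nhds 1) ∧
    ∀ᶠ q : ℝ in atTop,
      Real.sqrt (q * Real.log 4 - Real.log (q * Real.pi * Real.log 16)) ≤
        Φinv (1 - (2 : ℝ) ^ (-q)) := by
  have hkey := key Φinv hinv
  have hLpos : ∀ᶠ q : ℝ in atTop,
      0 < q * Real.log 4 - Real.log (q * π * Real.log 16) :=
    tendsto_L.eventually_gt_atTop 0
  have hlower : ∀ᶠ q : ℝ in atTop,
      Real.sqrt (q * Real.log 4 - Real.log (q * Real.pi * Real.log 16)) ≤
        Φinv (1 - (2 : ℝ) ^ (-q)) := by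
    filter_upwards [hkey] with q hq
    obtain ⟨h3, _, hE2⟩ := hq
    calc Real.sqrt (q * Real.log 4 - Real.log (q * π * Real.log 16))
        ≤ Real.sqrt ((Φinv (1 - (2:ℝ) ^ (-q))) ^ 2) := Real.sqrt_le_sqrt hE2
      _ = Φinv (1 - (2:ℝ) ^ (-q)) := Real.sqrt_sq (by linarith)
  refine ⟨?_, hlower⟩
  have hub : Tendsto (fun q : ℝ => Real.sqrt (q * Real.log 4 /
      (q * Real.log 4 - Real.log (q * π * Real.log 16)))) atTop (nhds 1) := by
    have h0 : Tendsto (fun q : ℝ =>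
        1 - Real.log (q * π * Real.log 16) / (q * Real.log 4)) atTop (nhds 1) := by
      simpa using tendsto_const_nhds.sub tendsto_r
    have h1 := h0.inv₀ one_ne_zero
    have h2 : Tendsto (fun q : ℝ => Real.sqrt
        ((1 - Real.log (q * π * Real.log 16) / (q * Real.log 4))⁻¹)) atTop (nhds 1) := by
      have := (Real.continuous_sqrt.tendsto (1:ℝ)⁻¹).comp h1
      simpa [Function.comp_def, Real.sqrt_one] using this
    apply h2.congr'
    filter_upwards [eventually_gt_atTop (0:ℝ)] with q hq
    congr 1
    have hne : q * Real.log 4 ≠ 0 := by positivity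
    rw [one_sub_div hne, inv_div]
  have hlb' : ∀ᶠ q : ℝ in atTop, (1:ℝ) ≤ Φinv (1 - (2:ℝ) ^ (-q)) /
      Real.sqrt (q * Real.log 4 - Real.log (q * π * Real.log 16)) := by
    filter_upwards [hlower, hLpos] with q hlo hLq
    exact (one_le_div (Real.sqrt_pos.2 hLq)).2 hlo
  have hub' : ∀ᶠ q : ℝ in atTop, Φinv (1 - (2:ℝ) ^ (-q)) /
      Real.sqrt (q * Real.log 4 - Real.log (q * π * Real.log 16)) ≤
      Real.sqrt (q * Real.log 4 / (q * Real.log 4 - Real.log (q * π * Real.log 16))) := by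
    filter_upwards [hkey, hLpos, eventually_gt_atTop (0:ℝ)] with q hq hLq hq0
    obtain ⟨h3, hE1, _⟩ := hq
    have hq4 : (0:ℝ) ≤ q * Real.log 4 := by positivity
    rw [Real.sqrt_div hq4]
    exact (div_le_div_iff_of_pos_right (Real.sqrt_pos.2 hLq)).2 ((Real.le_sqrt' (by linarith)).2 hE1)
  exact tendsto_of_tendsto_of_tendsto_of_le_of_le' tendsto_const_nhds hub hlb' hub'
end

section
/- Let f be twice continuously differentiable on [a,b] and let L(f)(u) := f(u) − α(f) − β(f)·u denote the error of the L²-optimal linear approximation. Then for each u ∈ [a,b], |L(f)(u)| ≤ 6·(b − a)²·max_{ξ∈[a,b]} |f''(ξ)|. -/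
open Real MeasureTheory

set_option maxHeartbeats 1000000

theorem peano_kernel_error_bound (a b : ℝ) (hab : a < b)
    (f f' f'' : ℝ → ℝ)
    (hf' : ∀ x ∈ Set.Icc a b, HasDerivWithinAt f (f' x) (Set.Icc a b) x)
    (hf'' : ∀ x ∈ Set.Icc a b, HasDerivWithinAt f' (f'' x) (Set.Icc a b) x)
    (hf''cont : ContinuousOn f'' (Set.Icc a b))
    (α β : ℝ)
    (hmin : ∀ α' β' : ℝ,
      (∫ u in Set.Icc a b, (f u - α - β * u) ^ 2) ≤
        ∫ u in Set.Icc a b, (f u - α' - β' * u) ^ 2)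
    (M : ℝ) (hM : ∀ ξ ∈ Set.Icc a b, |f'' ξ| ≤ M) :
    ∀ u ∈ Set.Icc a b, |f u - α - β * u| ≤ 6 * (b - a) ^ 2 * M := by
  intro u hu
  set I := Set.Icc a b with hI
  have hIm : MeasurableSet I := measurableSet_Icc
  have hfc : ContinuousOn f I := fun x hx => (hf' x hx).continuousWithinAt
  have hf'c : ContinuousOn f' I := fun x hx => (hf'' x hx).continuousWithinAt
  set g : ℝ → ℝ := fun x => f x - α - β * x with hgdef
  have hgc : ContinuousOn g I := by
    apply ContinuousOn.sub (ContinuousOn.sub hfc continuousOn_const)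
    exact (continuous_const.mul continuous_id).continuousOn
  have hM0 : 0 ≤ M := le_trans (abs_nonneg _) (hM a ⟨le_rfl, hab.le⟩)
  -- orthogonality conditions
  have key : ∀ w : ℝ → ℝ, ContinuousOn w I →
      (∀ t : ℝ, (∫ x in I, (g x) ^ 2) ≤ ∫ x in I, (g x - t * w x) ^ 2) →
      ∫ x in I, g x * w x = 0 := by
    intro w hwc hyp
    set A := ∫ x in I, g x * w x with hA
    set C := ∫ x in I, (w x) ^ 2 with hC
    have hC0 : 0 ≤ C := setIntegral_nonneg hIm (fun x _ => sq_nonneg _)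
    have expand : ∀ t : ℝ, (∫ x in I, (g x - t * w x) ^ 2)
        = (∫ x in I, (g x) ^ 2) + t * ((-2) * A + t * C) := by
      intro t
      have h1 : IntegrableOn (fun x => (g x) ^ 2) I := (hgc.pow 2).integrableOn_Icc
      have h2 : IntegrableOn (fun x => g x * w x) I := (hgc.mul hwc).integrableOn_Icc
      have h3 : IntegrableOn (fun x => (w x) ^ 2) I := (hwc.pow 2).integrableOn_Icc
      have heq : (fun x : ℝ => (g x - t * w x) ^ 2)
          = fun x => (g x) ^ 2 + ((-2 * t) * (g x * w x) + (t * t) * (w x) ^ 2) := by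
        funext x; ring
      have i4 : IntegrableOn (fun x => (-2 * t) * (g x * w x)) I := h2.const_mul (-2 * t)
      have i5 : IntegrableOn (fun x => (t * t) * (w x) ^ 2) I := h3.const_mul (t * t)
      have i45 : IntegrableOn
          (fun x => (-2 * t) * (g x * w x) + (t * t) * (w x) ^ 2) I := i4.add i5
      rw [heq, integral_add h1 i45, integral_add i4 i5,
        integral_const_mul, integral_const_mul, ← hA, ← hC]
      ring
    have hyp' : ∀ t : ℝ, 0 ≤ t * ((-2) * A + t * C) := by
      intro t
      have := hyp t
      rw [expand t] at this
      linarith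
    have hC1 : (0:ℝ) < C + 1 := by linarith
    have e1 := hyp' (A / (C + 1))
    have e2 : A = (A / (C + 1)) * (C + 1) := by field_simp
    set s := A / (C + 1) with hs
    rw [e2] at e1
    have e3 : s ^ 2 * (C + 2) ≤ 0 := by nlinarith [e1]
    have e4 : s ^ 2 = 0 := le_antisymm
      (by nlinarith [mul_nonneg (sq_nonneg s) hC0]) (sq_nonneg s)
    have e5 : s = 0 := sq_eq_zero_iff.mp e4
    rw [e2, e5, zero_mul]
  have hA : ∫ x in I, g x = 0 := by
    have := key (fun _ => 1) continuousOn_const (fun t => by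
      have := hmin (α + t) β
      have h : (fun x => (f x - (α + t) - β * x) ^ 2)
          = fun x => (g x - t * 1) ^ 2 := by funext x; simp [hgdef]; ring_nf
      calc (∫ x in I, (g x) ^ 2) ≤ ∫ x in I, (f x - (α + t) - β * x) ^ 2 := this
        _ = _ := by rw [h])
    simpa using this
  have hB : ∫ x in I, g x * x = 0 := by
    apply key (fun x => x) continuousOn_id
    intro t
    have := hmin α (β + t)
    have h : (fun x => (f x - α - (β + t) * x) ^ 2)
        = fun x => (g x - t * x) ^ 2 := by funext x; simp [hgdef]; ring_nf
    calc (∫ x in I, (g x) ^ 2) ≤ ∫ x in I, (f x - α - (β + t) * x) ^ 2 := this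
      _ = _ := by rw [h]
  -- existence of a zero of g
  obtain ⟨c, hc, hgc0⟩ : ∃ c ∈ I, g c = 0 := by
    obtain ⟨xm, hxm, hxmin⟩ := isCompact_Icc.exists_isMinOn (Set.nonempty_Icc.2 hab.le) hgc
    obtain ⟨xM, hxM, hxmax⟩ := isCompact_Icc.exists_isMaxOn (Set.nonempty_Icc.2 hab.le) hgc
    have hvol : (volume I).toReal = b - a := by
      rw [hI, Real.volume_Icc, ENNReal.toReal_ofReal (by linarith)]
    have hle : g xm ≤ 0 := by
      by_contra hpos
      push_neg at hpos
      have hconst : IntegrableOn (fun _ : ℝ => g xm) I :=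
        (continuousOn_const (c := g xm)).integrableOn_Icc
      have : (b - a) * (g xm) ≤ ∫ x in I, g x := by
        have h := setIntegral_mono_on hconst
          hgc.integrableOn_Icc hIm (fun x hx => hxmin hx)
        rw [setIntegral_const, smul_eq_mul] at h
        have hv1 : volume.real I = b - a := by rw [measureReal_def, hvol]
        rw [hv1] at h
        exact h
      rw [hA] at this
      nlinarith
    have hge : 0 ≤ g xM := by
      by_contra hneg
      push_neg at hneg
      have hconst : IntegrableOn (fun _ : ℝ => g xM) I :=
        (continuousOn_const (c := g xM)).integrableOn_Icc
      have : (∫ x in I, g x) ≤ (b - a) * (g xM) := by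
        have h := setIntegral_mono_on hgc.integrableOn_Icc hconst
          hIm (fun x hx => hxmax hx)
        rw [setIntegral_const, smul_eq_mul] at h
        have hv1 : volume.real I = b - a := by rw [measureReal_def, hvol]
        have hv2 : volume.real (Set.Icc a b) = b - a := hv1
        rw [hv2] at h
        exact h
      rw [hA] at this
      nlinarith
    have hsub : Set.uIcc xm xM ⊆ I := by
      rw [hI, ← Set.uIcc_of_le hab.le]
      exact Set.uIcc_subset_uIcc (by rwa [Set.uIcc_of_le hab.le])
        (by rwa [Set.uIcc_of_le hab.le])
    have h0 : (0:ℝ) ∈ Set.uIcc (g xm) (g xM) := Set.mem_uIcc.2 (Or.inl ⟨hle, hge⟩)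
    obtain ⟨c, hcmem, hc0⟩ := intermediate_value_uIcc (hgc.mono hsub) h0
    exact ⟨c, hsub hcmem, hc0⟩
  -- f' is M-Lipschitz on I
  have lip : ∀ x ∈ I, ∀ y ∈ I, |f' y - f' x| ≤ M * |y - x| := by
    intro x hx y hy
    have := Convex.norm_image_sub_le_of_norm_hasDerivWithin_le hf''
      (fun ξ hξ => by simpa [Real.norm_eq_abs] using hM ξ hξ) (convex_Icc a b) hx hy
    simpa [Real.norm_eq_abs] using this
  set γ := f' c - β with hγ
  -- Taylor-type remainder bound around c
  have Rb : ∀ x ∈ I, |g x - γ * (x - c)| ≤ M * (x - c) ^ 2 := by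
    intro x hx
    set s := Set.uIcc c x with hsdef
    have hsI : s ⊆ I := by
      rw [hI, ← Set.uIcc_of_le hab.le]
      exact Set.uIcc_subset_uIcc (by rwa [Set.uIcc_of_le hab.le])
        (by rwa [Set.uIcc_of_le hab.le])
    have hder : ∀ t ∈ s, HasDerivWithinAt (fun t => f t - α - f' c * t)
        (f' t - f' c) s t := by
      intro t ht
      have h1 := (hf' t (hsI ht)).mono hsI
      have h2 : HasDerivWithinAt (fun y : ℝ => f' c * y) (f' c) s t := by
        simpa using (hasDerivWithinAt_id t s).const_mul (f' c)
      exact (h1.sub_const α).sub h2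
    have bound : ∀ t ∈ s, ‖f' t - f' c‖ ≤ M * |x - c| := by
      intro t ht
      have h3 := lip c hc t (hsI ht)
      have h4 : |t - c| ≤ |x - c| := by
        rcases le_total c x with h | h
        · rw [hsdef, Set.uIcc_of_le h] at ht
          rw [abs_of_nonneg (by linarith [ht.1] : (0:ℝ) ≤ t - c),
            abs_of_nonneg (by linarith : (0:ℝ) ≤ x - c)]
          linarith [ht.2]
        · rw [hsdef, Set.uIcc_of_ge h] at ht
          rw [abs_of_nonpos (by linarith [ht.2] : t - c ≤ 0),
            abs_of_nonpos (by linarith : x - c ≤ 0)]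
          linarith [ht.1]
      have h5 : M * |t - c| ≤ M * |x - c| := mul_le_mul_of_nonneg_left h4 hM0
      rw [Real.norm_eq_abs]
      linarith
    have key2 := Convex.norm_image_sub_le_of_norm_hasDerivWithin_le hder bound
      (convex_uIcc c x) (Set.left_mem_uIcc) (Set.right_mem_uIcc)
    have heq2 : g x - γ * (x - c)
        = (f x - α - f' c * x) - (f c - α - f' c * c) := by
      have h0 : f c - α - β * c = 0 := hgc0
      simp only [hgdef]
      linear_combination h0
    rw [Real.norm_eq_abs, Real.norm_eq_abs] at key2
    calc |g x - γ * (x - c)| = |(f x - α - f' c * x) - (f c - α - f' c * c)| := by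
          rw [heq2]
      _ ≤ M * |x - c| * |x - c| := key2
      _ = M * (x - c) ^ 2 := by rw [mul_assoc, abs_mul_abs_self, sq]
  -- positivity of ∫ (x-c)^2
  have hPpos : 0 < ∫ x in I, (x - c) ^ 2 := by
    have h1 : (∫ x in I, (x - c) ^ 2) = ∫ x in a..b, (x - c) ^ 2 := by
      rw [hI, MeasureTheory.integral_Icc_eq_integral_Ioc,
        intervalIntegral.integral_of_le hab.le]
    have h2 : (∫ x in a..b, (x - c) ^ 2) = ((b - c) ^ 3 - (a - c) ^ 3) / 3 := by
      have h3 : (∫ x in a..b, (x - c) ^ 2) = ∫ x in a - c..b - c, x ^ 2 :=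
        intervalIntegral.integral_comp_sub_right (a := a) (b := b)
          (fun x : ℝ => x ^ 2) c
      rw [h3, integral_pow]
      norm_num
    rw [h1, h2]
    rcases hc.2.lt_or_eq with h | h
    · have p1 : 0 < (b - c) ^ 3 := pow_pos (by linarith) 3
      have p2 : (a - c) ^ 3 ≤ 0 := Odd.pow_nonpos (by decide) (by linarith [hc.1])
      linarith
    · have p1 : (a - c) ^ 3 < 0 := Odd.pow_neg (by decide) (by rw [h]; linarith)
      have p2 : (b - c) ^ 3 = 0 := by rw [h]; ring
      linarith
  -- orthogonality gives slope bound
  have hcont2 : ContinuousOn (fun x : ℝ => (x - c) ^ 2) I :=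
    ((continuousOn_id.sub continuousOn_const).pow 2)
  have hcontR : ContinuousOn (fun x : ℝ => (x - c) * (g x - γ * (x - c))) I :=
    (continuousOn_id.sub continuousOn_const).mul
      (hgc.sub (continuousOn_const.mul (continuousOn_id.sub continuousOn_const)))
  have hiP : IntegrableOn (fun x : ℝ => (x - c) ^ 2) I := hcont2.integrableOn_Icc
  have hiR : IntegrableOn (fun x : ℝ => (x - c) * (g x - γ * (x - c))) I :=
    hcontR.integrableOn_Icc
  have hOrth : (∫ x in I, (x - c) * g x) = 0 := by
    have hi1 : IntegrableOn (fun x => g x * x) I :=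
      (hgc.mul continuousOn_id).integrableOn_Icc
    have hi2 : IntegrableOn (fun x => c * g x) I := hgc.integrableOn_Icc.const_mul c
    have heq3 : (fun x : ℝ => (x - c) * g x) = fun x => g x * x - c * g x := by
      funext x; ring
    rw [heq3, integral_sub hi1 hi2, hB, integral_const_mul, hA, mul_zero, sub_zero]
  have hsplit : (∫ x in I, (x - c) * g x)
      = γ * (∫ x in I, (x - c) ^ 2) + ∫ x in I, (x - c) * (g x - γ * (x - c)) := by
    have hi3 : IntegrableOn (fun x : ℝ => γ * (x - c) ^ 2) I := hiP.const_mul γ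
    calc (∫ x in I, (x - c) * g x)
        = ∫ x in I, (γ * (x - c) ^ 2 + (x - c) * (g x - γ * (x - c))) :=
          setIntegral_congr_fun hIm (fun x _ => by ring)
      _ = (∫ x in I, γ * (x - c) ^ 2) + ∫ x in I, (x - c) * (g x - γ * (x - c)) :=
          integral_add hi3 hiR
      _ = γ * (∫ x in I, (x - c) ^ 2) + ∫ x in I, (x - c) * (g x - γ * (x - c)) := by
          rw [integral_const_mul]
  have hQ : |∫ x in I, (x - c) * (g x - γ * (x - c))|
      ≤ ((b - a) * M) * ∫ x in I, (x - c) ^ 2 := by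
    have step1 : |∫ x in I, (x - c) * (g x - γ * (x - c))|
        ≤ ∫ x in I, |x - c| * |g x - γ * (x - c)| :=
      by simpa [Real.norm_eq_abs, abs_mul] using
        norm_integral_le_integral_norm (μ := volume.restrict I)
          (fun x => (x - c) * (g x - γ * (x - c)))
    have hiR' : IntegrableOn (fun x : ℝ => |x - c| * |g x - γ * (x - c)|) I := by
      have : (fun x : ℝ => |x - c| * |g x - γ * (x - c)|)
          = fun x => |(x - c) * (g x - γ * (x - c))| := by
        funext x; rw [abs_mul]
      rw [this]; exact hiR.abs
    have step2 : (∫ x in I, |x - c| * |g x - γ * (x - c)|)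
        ≤ ∫ x in I, ((b - a) * M) * (x - c) ^ 2 := by
      apply setIntegral_mono_on hiR' (hiP.const_mul _) hIm
      intro x hx
      have habs : |x - c| ≤ b - a := by
        rw [abs_le]; constructor <;>
          [linarith [hx.1, hc.2]; linarith [hx.2, hc.1]]
      calc |x - c| * |g x - γ * (x - c)| ≤ (b - a) * (M * (x - c) ^ 2) :=
            mul_le_mul habs (Rb x hx) (abs_nonneg _) (by linarith)
        _ = ((b - a) * M) * (x - c) ^ 2 := by ring
    calc |∫ x in I, (x - c) * (g x - γ * (x - c))|
        ≤ ∫ x in I, |x - c| * |g x - γ * (x - c)| := step1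
      _ ≤ ∫ x in I, ((b - a) * M) * (x - c) ^ 2 := step2
      _ = ((b - a) * M) * ∫ x in I, (x - c) ^ 2 := integral_const_mul _ _
  have hγb : |γ| ≤ (b - a) * M := by
    have h6 : γ * (∫ x in I, (x - c) ^ 2)
        = -∫ x in I, (x - c) * (g x - γ * (x - c)) := by
      rw [hsplit] at hOrth; linarith
    have h7 : |γ| * (∫ x in I, (x - c) ^ 2) ≤ ((b - a) * M) * ∫ x in I, (x - c) ^ 2 := by
      calc |γ| * (∫ x in I, (x - c) ^ 2)
          = |γ * (∫ x in I, (x - c) ^ 2)| := by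
            rw [abs_mul, abs_of_nonneg hPpos.le]
        _ = |∫ x in I, (x - c) * (g x - γ * (x - c))| := by rw [h6, abs_neg]
        _ ≤ _ := hQ
    exact le_of_mul_le_mul_right h7 hPpos
  -- conclusion
  have huc : |u - c| ≤ b - a := by
    rw [abs_le]; constructor <;>
      [linarith [hu.1, hc.2]; linarith [hu.2, hc.1]]
  have hsq : (u - c) ^ 2 ≤ (b - a) ^ 2 := by
    rw [← sq_abs]
    exact pow_le_pow_left₀ (abs_nonneg _) huc 2
  have tri : |g u| ≤ |γ| * |u - c| + M * (u - c) ^ 2 := by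
    have h1 := Rb u hu
    calc |g u| = |γ * (u - c) + (g u - γ * (u - c))| := by ring_nf
      _ ≤ |γ * (u - c)| + |g u - γ * (u - c)| := abs_add_le _ _
      _ ≤ |γ| * |u - c| + M * (u - c) ^ 2 := by rw [abs_mul]; linarith
  have hmul : |γ| * |u - c| ≤ ((b - a) * M) * (b - a) :=
    mul_le_mul hγb huc (abs_nonneg _) (mul_nonneg (by linarith) hM0)
  have hMsq : M * (u - c) ^ 2 ≤ M * (b - a) ^ 2 := mul_le_mul_of_nonneg_left hsq hM0
  have hfin : (0:ℝ) ≤ M * (b - a) ^ 2 := by positivity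
  nlinarith [tri, hmul, hMsq, hfin]
end
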